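/- Let f : ℝᵐ × ℝⁿ → ℝ be twice continuously differentiable, β > 0, and suppose that for every fixed y the function x ↦ f(x,y) is convex and for every fixed x the function y ↦ f(x,y) is concave. Let z : ℝ → ℝᵐ × ℝⁿ, z(t) = (x(t), y(t)), be a differentiable curve satisfying the gradient-descent-ascent flow x'(t) = −β·∇ₓf(x(t),y(t)), y'(t) = β·∇_yf(x(t),y(t)) for all t. Then the function t ↦ ‖∇ₓf(x(t),y(t))‖² + ‖∇_yf(x(t),y(t))‖² is nonincreasing on ℝ. -/

import Mathlib

open Matrix

lemma hasDerivAt_dot {k : ℕ} {u v : ℝ → Fin k → ℝ} {u' v' : Fin k → ℝ} {t : ℝ}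
    (hu : HasDerivAt u u' t) (hv : HasDerivAt v v' t) :
    HasDerivAt (fun s => u s ⬝ᵥ v s) (u' ⬝ᵥ v t + u t ⬝ᵥ v') t := by
  have hui : ∀ i, HasDerivAt (fun s => u s i) (u' i) t := fun i =>
    (ContinuousLinearMap.proj (R := ℝ) (φ := fun _ : Fin k => ℝ) i).hasFDerivAt.comp_hasDerivAt t hu
  have hvi : ∀ i, HasDerivAt (fun s => v s i) (v' i) t := fun i =>
    (ContinuousLinearMap.proj (R := ℝ) (φ := fun _ : Fin k => ℝ) i).hasFDerivAt.comp_hasDerivAt t hv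
  have := HasDerivAt.fun_sum (u := Finset.univ)
    (fun i _ => ((hui i).mul (hvi i)) : ∀ i ∈ Finset.univ, HasDerivAt (fun s => u s i * v s i) (u' i * v t i + u t i * v' i) t)
  simpa [dotProduct, Finset.sum_add_distrib] using this

lemma deriv_le_slope' {φ : ℝ → ℝ} {d : ℝ} (hd : HasDerivAt φ d 0)
    (hφ : ∀ s ∈ Set.Ioo (0:ℝ) 1, φ s ≤ (1 - s) * φ 0 + s * φ 1) : d ≤ φ 1 - φ 0 := by
  refine le_of_tendsto hd.tendsto_slope_zero_right ?_
  filter_upwards [Ioo_mem_nhdsGT one_pos] with s hs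
  have h := hφ s hs
  have hs0 := hs.1
  rw [smul_eq_mul, zero_add, inv_mul_le_iff₀ hs0]
  nlinarith

/-- Along the gradient-descent-ascent flow on a C² convex-concave function, the squared
gradient norm `‖∇ₓf‖² + ‖∇_yf‖²` is nonincreasing in time. -/
theorem gda_flow_sq_grad_norm_antitone (m n : ℕ)
    (f : (Fin m → ℝ) × (Fin n → ℝ) → ℝ) (hf : ContDiff ℝ 2 f)
    (β : ℝ) (hβ : 0 < β)
    (gx : (Fin m → ℝ) × (Fin n → ℝ) → Fin m → ℝ)
    (gy : (Fin m → ℝ) × (Fin n → ℝ) → Fin n → ℝ)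
    (hgrad : ∀ z, ∃ L : ((Fin m → ℝ) × (Fin n → ℝ)) →L[ℝ] ℝ,
      HasFDerivAt f L z ∧ ∀ w, L w = gx z ⬝ᵥ w.1 + gy z ⬝ᵥ w.2)
    (hconv : ∀ y₀ : Fin n → ℝ, ConvexOn ℝ Set.univ fun x₀ => f (x₀, y₀))
    (hconc : ∀ x₀ : Fin m → ℝ, ConcaveOn ℝ Set.univ fun y₀ => f (x₀, y₀))
    (x : ℝ → Fin m → ℝ) (y : ℝ → Fin n → ℝ)
    (hx : ∀ t, HasDerivAt x ((-β) • gx (x t, y t)) t)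
    (hy : ∀ t, HasDerivAt y (β • gy (x t, y t)) t) :
    Antitone fun t => gx (x t, y t) ⬝ᵥ gx (x t, y t) + gy (x t, y t) ⬝ᵥ gy (x t, y t) := by
  -- first-order convexity inequality in x
  have key_x : ∀ (y₀ : Fin n → ℝ) (a b : Fin m → ℝ),
      gx (a, y₀) ⬝ᵥ (b - a) ≤ f (b, y₀) - f (a, y₀) := by
    intro y₀ a b
    obtain ⟨L, hL', hLv⟩ := hgrad (a, y₀)
    have hL : HasFDerivAt f L (a + (0:ℝ) • (b - a), y₀) := by simpa using hL'
    have hc : HasDerivAt (fun s : ℝ => ((a + s • (b - a), y₀) : (Fin m → ℝ) × (Fin n → ℝ)))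
        ((b - a, (0 : Fin n → ℝ))) 0 := by
      refine HasDerivAt.prodMk ?_ (hasDerivAt_const _ _)
      simpa using ((hasDerivAt_id (0:ℝ)).smul_const (b - a)).const_add a
    have hφ : HasDerivAt (fun s : ℝ => f (a + s • (b - a), y₀)) (gx (a, y₀) ⬝ᵥ (b - a)) 0 := by
      have h2 := hL.comp_hasDerivAt 0 hc
      simpa [hLv, Function.comp_def, Pi.neg_def] using h2
    have hsl := deriv_le_slope' hφ ?_
    · simpa using hsl
    · intro s hs
      have hcv := (hconv y₀).2 (Set.mem_univ a) (Set.mem_univ b)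
        (by linarith [hs.2] : (0:ℝ) ≤ 1 - s) hs.1.le (by ring)
      have hpt : (1 - s) • a + s • b = a + s • (b - a) := by
        funext i; simp [smul_eq_mul]; ring
      rw [hpt] at hcv
      simpa [smul_eq_mul] using hcv
  -- first-order concavity inequality in y
  have key_y : ∀ (x₀ : Fin m → ℝ) (a b : Fin n → ℝ),
      f (x₀, b) - f (x₀, a) ≤ gy (x₀, a) ⬝ᵥ (b - a) := by
    intro x₀ a b
    obtain ⟨L, hL', hLv⟩ := hgrad (x₀, a)
    have hL : HasFDerivAt f L (x₀, a + (0:ℝ) • (b - a)) := by simpa using hL'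
    have hc : HasDerivAt (fun s : ℝ => ((x₀, a + s • (b - a)) : (Fin m → ℝ) × (Fin n → ℝ)))
        (((0 : Fin m → ℝ), b - a)) 0 := by
      refine HasDerivAt.prodMk (hasDerivAt_const _ _) ?_
      simpa using ((hasDerivAt_id (0:ℝ)).smul_const (b - a)).const_add a
    have hφ : HasDerivAt (fun s : ℝ => -f (x₀, a + s • (b - a))) (-(gy (x₀, a) ⬝ᵥ (b - a))) 0 := by
      have h2 := (hL.comp_hasDerivAt 0 hc).neg
      simpa [hLv, Function.comp_def, Pi.neg_def] using h2
    have hsl := deriv_le_slope' hφ ?_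
    · have : -(gy (x₀, a) ⬝ᵥ (b - a)) ≤ -f (x₀, b) + f (x₀, a) := by
        simpa using hsl
      linarith
    · intro s hs
      have hcv := (hconc x₀).2 (Set.mem_univ a) (Set.mem_univ b)
        (by linarith [hs.2] : (0:ℝ) ≤ 1 - s) hs.1.le (by ring)
      have hpt : (1 - s) • a + s • b = a + s • (b - a) := by
        funext i; simp [smul_eq_mul]; ring
      rw [hpt] at hcv
      have hab : a + (b - a) = b := by funext i; simp
      simp only [zero_smul, add_zero, one_smul, smul_eq_mul] at hcv ⊢
      rw [hab]
      linarith
  -- monotonicity of the GDA field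
  have mono : ∀ (a₁ a₂ : Fin m → ℝ) (b₁ b₂ : Fin n → ℝ),
      (gy (a₁, b₁) - gy (a₂, b₂)) ⬝ᵥ (b₁ - b₂) ≤ (gx (a₁, b₁) - gx (a₂, b₂)) ⬝ᵥ (a₁ - a₂) := by
    intro a₁ a₂ b₁ b₂
    have h1 := key_x b₁ a₁ a₂
    have h2 := key_x b₂ a₂ a₁
    have h3 := key_y a₁ b₁ b₂
    have h4 := key_y a₂ b₂ b₁
    simp only [sub_dotProduct, dotProduct_sub] at *
    linarith
  -- conclusion
  intro s t hst
  simp only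
  have hβ2 : (0:ℝ) < β * β := mul_pos hβ hβ
  rw [← mul_le_mul_iff_right₀ hβ2]
  have hNXY : ∀ u : ℝ, ((-β) • gx (x u, y u)) ⬝ᵥ ((-β) • gx (x u, y u))
        + (β • gy (x u, y u)) ⬝ᵥ (β • gy (x u, y u))
      = β * β * (gx (x u, y u) ⬝ᵥ gx (x u, y u) + gy (x u, y u) ⬝ᵥ gy (x u, y u)) := by
    intro u
    simp [smul_dotProduct, dotProduct_smul, smul_eq_mul]
    ring
  rw [← hNXY, ← hNXY]
  -- contraction: for every shift h, the squared displacement is antitone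
  have hD : ∀ h : ℝ, Antitone (fun u =>
      (x (u + h) - x u) ⬝ᵥ (x (u + h) - x u) + (y (u + h) - y u) ⬝ᵥ (y (u + h) - y u)) := by
    intro h
    have key : ∀ u : ℝ, ∃ d : ℝ, d ≤ 0 ∧ HasDerivAt (fun u =>
        (x (u + h) - x u) ⬝ᵥ (x (u + h) - x u) + (y (u + h) - y u) ⬝ᵥ (y (u + h) - y u)) d u := by
      intro u
      have hshift : HasDerivAt (fun u : ℝ => u + h) 1 u := by
        simpa using (hasDerivAt_id u).add_const h
      have hDx : HasDerivAt (fun u => x (u + h) - x u)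
          ((-β) • gx (x (u + h), y (u + h)) - (-β) • gx (x u, y u)) u := by
        have := ((hx (u + h)).scomp u hshift).sub (hx u)
        simpa [Function.comp, sub_eq_add_neg, Function.comp_def, Pi.add_def, Pi.neg_def] using this
      have hDy : HasDerivAt (fun u => y (u + h) - y u)
          (β • gy (x (u + h), y (u + h)) - β • gy (x u, y u)) u := by
        have := ((hy (u + h)).scomp u hshift).sub (hy u)
        simpa [Function.comp, sub_eq_add_neg, Function.comp_def, Pi.add_def, Pi.neg_def] using this
      refine ⟨_, ?_, (hasDerivAt_dot hDx hDx).add (hasDerivAt_dot hDy hDy)⟩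
      have hm := mono (x (u + h)) (x u) (y (u + h)) (y u)
      rw [dotProduct_comm (x (u + h) - x u), dotProduct_comm (y (u + h) - y u)]
      have ex : ((-β) • gx (x (u + h), y (u + h)) - (-β) • gx (x u, y u)) ⬝ᵥ (x (u + h) - x u)
          = -β * ((gx (x (u + h), y (u + h)) - gx (x u, y u)) ⬝ᵥ (x (u + h) - x u)) := by
        simp [sub_dotProduct, dotProduct_sub, smul_dotProduct, smul_eq_mul]; ring
      have ey : (β • gy (x (u + h), y (u + h)) - β • gy (x u, y u)) ⬝ᵥ (y (u + h) - y u)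
          = β * ((gy (x (u + h), y (u + h)) - gy (x u, y u)) ⬝ᵥ (y (u + h) - y u)) := by
        simp [sub_dotProduct, dotProduct_sub, smul_dotProduct, smul_eq_mul]; ring
      rw [ex, ey]
      nlinarith
    apply antitone_of_deriv_nonpos
    · intro u
      obtain ⟨d, _, hd⟩ := key u
      exact hd.differentiableAt
    · intro u
      obtain ⟨d, hd0, hd⟩ := key u
      rw [hd.deriv]; exact hd0
  -- pass to the limit h → 0⁺
  have hdotc : ∀ k : ℕ, Continuous (fun v : Fin k → ℝ => v ⬝ᵥ v) := fun k =>
    continuous_id.dotProduct continuous_id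
  have hlim : ∀ u : ℝ, Filter.Tendsto (fun h : ℝ =>
      (h⁻¹ • (x (u + h) - x u)) ⬝ᵥ (h⁻¹ • (x (u + h) - x u))
      + (h⁻¹ • (y (u + h) - y u)) ⬝ᵥ (h⁻¹ • (y (u + h) - y u)))
      (nhdsWithin 0 (Set.Ioi 0)) (nhds (((-β) • gx (x u, y u)) ⬝ᵥ ((-β) • gx (x u, y u))
        + (β • gy (x u, y u)) ⬝ᵥ (β • gy (x u, y u)))) := by
    intro u
    have h1 := (hx u).tendsto_slope_zero_right
    have h2 := (hy u).tendsto_slope_zero_right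
    exact (((hdotc m).tendsto _).comp h1).add (((hdotc n).tendsto _).comp h2)
  refine le_of_tendsto_of_tendsto' (hlim t) (hlim s) ?_
  intro h
  have hDst := hD h hst
  simp only at hDst
  simp only [smul_dotProduct, dotProduct_smul, smul_eq_mul]
  nlinarith [mul_self_nonneg (h⁻¹)]
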